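/- Let λ, μ be real numbers with 0 ≤ λ < 1 and 0 ≤ μ < 1. Then there exists W such that for every integer w ≥ W, all 2w + 4 complex roots (counted with multiplicity) of the polynomial D_w(p) = (1 − λ²p²)(1 − μ²p²) − (λ² − p²)(μ² − p²)p^{2w} lie on the unit circle |p| = 1. -/

import Mathlib

open Polynomial

/-- The denominator polynomial `D_w(p) = (1 − λ²p²)(1 − μ²p²) − (λ² − p²)(μ² − p²)p^{2w}`,
viewed as a polynomial over `ℂ` with real parameters `λ, μ`. -/
noncomputable def Dpoly (lam mu : ℝ) (w : ℕ) : Polynomial ℂ :=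
  (1 - C ((lam : ℂ) ^ 2) * X ^ 2) * (1 - C ((mu : ℂ) ^ 2) * X ^ 2) -
    (C ((lam : ℂ) ^ 2) - X ^ 2) * (C ((mu : ℂ) ^ 2) - X ^ 2) * X ^ (2 * w)

lemma Dpoly_eval (lam mu : ℝ) (w : ℕ) (p : ℂ) :
    (Dpoly lam mu w).eval p =
      (1 - (lam : ℂ) ^ 2 * p ^ 2) * (1 - (mu : ℂ) ^ 2 * p ^ 2) -
        ((lam : ℂ) ^ 2 - p ^ 2) * ((mu : ℂ) ^ 2 - p ^ 2) * p ^ (2 * w) := by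
  simp [Dpoly]

lemma blaschke (a : ℝ) (z : ℂ) (ha0 : 0 ≤ a) (ha1 : a ≤ 1) (hz : ‖z‖ ≤ 1) :
    ‖(a : ℂ) - z‖ ≤ ‖1 - (a : ℂ) * z‖ := by
  have h1 : Complex.normSq ((a : ℂ) - z) ≤ Complex.normSq (1 - (a : ℂ) * z) := by
    have hz2 : z.re ^ 2 + z.im ^ 2 ≤ 1 := by
      have h := Complex.sq_norm z
      rw [Complex.normSq_apply] at h
      nlinarith [pow_le_one₀ (n := 2) (norm_nonneg z) hz]
    simp only [Complex.normSq_apply, Complex.sub_re, Complex.sub_im, Complex.mul_re,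
      Complex.mul_im, Complex.ofReal_re, Complex.ofReal_im, Complex.one_re, Complex.one_im]
    nlinarith [mul_nonneg (by nlinarith : (0:ℝ) ≤ 1 - a^2) (by linarith : (0:ℝ) ≤ 1 - z.re^2 - z.im^2)]
  calc ‖(a : ℂ) - z‖ = Real.sqrt (Complex.normSq ((a:ℂ) - z)) := by
        rw [Complex.norm_def]
    _ ≤ Real.sqrt (Complex.normSq (1 - (a:ℂ) * z)) := Real.sqrt_le_sqrt h1
    _ = ‖1 - (a : ℂ) * z‖ := by rw [Complex.norm_def]

lemma no_root_in_disk (lam mu : ℝ) (hlam0 : 0 ≤ lam) (hlam1 : lam < 1)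
    (hmu0 : 0 ≤ mu) (hmu1 : mu < 1) (w : ℕ) (hw : 1 ≤ w) (p : ℂ)
    (hp : ‖p‖ < 1) : (Dpoly lam mu w).eval p ≠ 0 := by
  rw [Dpoly_eval]
  set A : ℂ := (1 - (lam : ℂ) ^ 2 * p ^ 2) * (1 - (mu : ℂ) ^ 2 * p ^ 2) with hA
  set B : ℂ := ((lam : ℂ) ^ 2 - p ^ 2) * ((mu : ℂ) ^ 2 - p ^ 2) with hB
  have habs_p2 : ‖p ^ 2‖ ≤ 1 := by
    rw [norm_pow]
    exact pow_le_one₀ (norm_nonneg p) hp.le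
  -- |A| > 0
  have hAfac1 : (0:ℝ) < 1 - lam ^ 2 * ‖p^2‖ := by
    nlinarith [norm_nonneg (p^2), sq_nonneg lam]
  have hA1 : 1 - lam ^ 2 * ‖p ^ 2‖ ≤ ‖1 - (lam : ℂ) ^ 2 * p ^ 2‖ := by
    have := norm_sub_norm_le 1 ((lam : ℂ) ^ 2 * p ^ 2)
    simpa [norm_mul, ← Complex.ofReal_pow, Complex.norm_real, Real.norm_eq_abs, abs_of_nonneg (sq_nonneg lam), abs_of_nonneg hlam0]
      using this
  have hAfac2 : (0:ℝ) < 1 - mu ^ 2 * ‖p^2‖ := by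
    nlinarith [norm_nonneg (p^2), sq_nonneg mu]
  have hA2 : 1 - mu ^ 2 * ‖p ^ 2‖ ≤ ‖1 - (mu : ℂ) ^ 2 * p ^ 2‖ := by
    have := norm_sub_norm_le 1 ((mu : ℂ) ^ 2 * p ^ 2)
    simpa [norm_mul, ← Complex.ofReal_pow, Complex.norm_real, Real.norm_eq_abs, abs_of_nonneg (sq_nonneg mu), abs_of_nonneg hmu0]
      using this
  have hApos : 0 < ‖A‖ := by
    rw [hA, norm_mul]
    have := mul_le_mul hA1 hA2 hAfac2.le (norm_nonneg _)
    nlinarith [mul_pos hAfac1 hAfac2]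
  -- |B| ≤ |A|
  have hBle : ‖B‖ ≤ ‖A‖ := by
    rw [hA, hB, norm_mul, norm_mul]
    have h1 : ‖(lam : ℂ) ^ 2 - p ^ 2‖ ≤ ‖1 - (lam : ℂ) ^ 2 * p ^ 2‖ := by
      have := blaschke (lam ^ 2) (p ^ 2) (sq_nonneg lam) (by nlinarith) habs_p2
      simpa [Complex.ofReal_pow] using this
    have h2 : ‖(mu : ℂ) ^ 2 - p ^ 2‖ ≤ ‖1 - (mu : ℂ) ^ 2 * p ^ 2‖ := by
      have := blaschke (mu ^ 2) (p ^ 2) (sq_nonneg mu) (by nlinarith) habs_p2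
      simpa [Complex.ofReal_pow] using this
    exact mul_le_mul h1 h2 (norm_nonneg _) (norm_nonneg _)
  have hpow : ‖p ^ (2 * w)‖ < 1 := by
    rw [norm_pow]
    exact pow_lt_one₀ (norm_nonneg p) hp (by omega)
  have hlt : ‖B * p ^ (2 * w)‖ < ‖A‖ := by
    rw [norm_mul]
    calc ‖B‖ * ‖p ^ (2 * w)‖
        ≤ ‖A‖ * ‖p ^ (2 * w)‖ :=
          mul_le_mul_of_nonneg_right hBle (norm_nonneg _)
      _ < ‖A‖ * 1 := by
          exact mul_lt_mul_of_pos_left hpow hApos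
      _ = ‖A‖ := mul_one _
  intro h
  rw [sub_eq_zero] at h
  rw [h] at hlt
  exact lt_irrefl _ hlt

lemma inversion (lam mu : ℝ) (w : ℕ) (p : ℂ) (hp : p ≠ 0)
    (h : (Dpoly lam mu w).eval p = 0) : (Dpoly lam mu w).eval p⁻¹ = 0 := by
  rw [Dpoly_eval] at h ⊢
  have hq : p ^ (2 * w) ≠ 0 := pow_ne_zero _ hp
  have hp2 : p ^ 2 ≠ 0 := pow_ne_zero _ hp
  rw [inv_pow, inv_pow]
  have key : (1 - (lam : ℂ) ^ 2 * (p ^ 2)⁻¹) * (1 - (mu : ℂ) ^ 2 * (p ^ 2)⁻¹) -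
      ((lam : ℂ) ^ 2 - (p ^ 2)⁻¹) * ((mu : ℂ) ^ 2 - (p ^ 2)⁻¹) * (p ^ (2 * w))⁻¹ =
      -(((1 - (lam : ℂ) ^ 2 * p ^ 2) * (1 - (mu : ℂ) ^ 2 * p ^ 2) -
        ((lam : ℂ) ^ 2 - p ^ 2) * ((mu : ℂ) ^ 2 - p ^ 2) * p ^ (2 * w)) /
        (p ^ (2 * w) * (p ^ 2) ^ 2)) := by
    field_simp
    ring
  rw [key, h]
  simp

lemma Dpoly_natDegree (lam mu : ℝ) (w : ℕ) (hw : 1 ≤ w) :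
    (Dpoly lam mu w).natDegree = 2 * w + 4 := by
  unfold Dpoly
  compute_degree!
  any_goals omega
  rw [if_neg (by omega : ¬ w = 0), if_pos (by omega : 2 * w + 4 = 4 + 2 * w)]
  simp

/-- for `0 ≤ λ < 1` and `0 ≤ μ < 1`, for all sufficiently large `w`
all `2w + 4` roots of `D_w` (with multiplicity) lie on the unit circle. -/
theorem roots_on_circle_desorbed (lam mu : ℝ)
    (hlam0 : 0 ≤ lam) (hlam1 : lam < 1) (hmu0 : 0 ≤ mu) (hmu1 : mu < 1) :
    ∃ W : ℕ, ∀ w : ℕ, W ≤ w →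
      (Dpoly lam mu w).roots.card = 2 * w + 4 ∧
      ∀ p ∈ (Dpoly lam mu w).roots, ‖p‖ = 1 := by
  refine ⟨1, fun w hw => ?_⟩
  have hdeg := Dpoly_natDegree lam mu w hw
  have hD : Dpoly lam mu w ≠ 0 := by
    intro h
    rw [h, natDegree_zero] at hdeg
    omega
  constructor
  · rw [← hdeg]
    exact (splits_iff_card_roots.mp (IsAlgClosed.splits (Dpoly lam mu w)))
  · intro p hp
    have hroot : (Dpoly lam mu w).eval p = 0 := isRoot_of_mem_roots hp
    rcases lt_trichotomy (‖p‖) 1 with h | h | h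
    · exact absurd hroot (no_root_in_disk lam mu hlam0 hlam1 hmu0 hmu1 w hw p h)
    · exact h
    · exfalso
      have hp0 : p ≠ 0 := by
        intro h0; rw [h0] at h; simp at h; linarith
      have hinv := inversion lam mu w p hp0 hroot
      have : ‖p⁻¹‖ < 1 := by
        rw [norm_inv]
        rw [inv_lt_one_iff₀]
        right; exact h
      exact no_root_in_disk lam mu hlam0 hlam1 hmu0 hmu1 w hw p⁻¹ this hinv
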